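/- arXiv:2203.04544 — 2 statements merged into one kernel-verified Lean document; each statement's English description precedes it below -/
import Mathlib

section
/- For every nonzero quaternion q and every real number s, the quaternion T₊(q)(s) = (|q|⁴ − s² + 2s·q̄·i·q)/(|q|⁴ + s²) has norm 1. -/
/-- The standard imaginary unit quaternion `i`. -/
noncomputable def qi : Quaternion ℝ := ⟨0, 1, 0, 0⟩

/-- The path lift `T₊(q)(s)` of the clutching function of `FS⁵`. -/
noncomputable def Tplus (q : Quaternion ℝ) (s : ℝ) : Quaternion ℝ :=
  (((‖q‖ ^ 4 - s ^ 2 : ℝ) : Quaternion ℝ) + 2 * (s : Quaternion ℝ) * star q * qi * q) /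
    ((‖q‖ ^ 4 + s ^ 2 : ℝ) : Quaternion ℝ)

theorem Tplus_norm_one (q : Quaternion ℝ) (hq : q ≠ 0) (s : ℝ) : ‖Tplus q s‖ = 1 := by
  have hqn : (0:ℝ) < ‖q‖ := norm_pos_iff.mpr hq
  have hq4 : (0:ℝ) < ‖q‖ ^ 4 + s ^ 2 := by positivity
  set u : Quaternion ℝ := star q * qi * q with hu
  have hure : u.re = 0 := by
    simp only [hu, Quaternion.re_mul, Quaternion.imI_mul, Quaternion.imJ_mul, Quaternion.imK_mul,
      Quaternion.re_star, Quaternion.imI_star, Quaternion.imJ_star, Quaternion.imK_star,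
      show qi.re = 0 from rfl, show qi.imI = 1 from rfl, show qi.imJ = 0 from rfl, show qi.imK = 0 from rfl]
    ring
  have hun : Quaternion.normSq u = ‖q‖ ^ 4 := by
    have hqi1 : Quaternion.normSq qi = 1 := by rw [Quaternion.normSq_def']; simp [qi]
    rw [hu, map_mul, map_mul, Quaternion.normSq_star, hqi1, Quaternion.normSq_eq_norm_mul_self]
    ring
  have key : Quaternion.normSq (((‖q‖ ^ 4 - s ^ 2 : ℝ) : Quaternion ℝ) + 2 * (s : Quaternion ℝ) * star q * qi * q)
      = (‖q‖ ^ 4 + s ^ 2) ^ 2 := by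
    have h2 : 2 * (s : Quaternion ℝ) * star q * qi * q = ((2*s : ℝ) : Quaternion ℝ) * u := by
      rw [hu, Quaternion.coe_mul]
      have c2 : ((2:ℝ) : Quaternion ℝ) = 2 := by norm_cast
      rw [c2]; noncomm_ring
    rw [h2, Quaternion.normSq_add]
    have : ((((‖q‖ ^ 4 - s ^ 2 : ℝ)) : Quaternion ℝ) * star (((2*s:ℝ) : Quaternion ℝ) * u)).re = 0 := by
      rw [star_mul, Quaternion.star_coe]
      simp only [Quaternion.re_mul, Quaternion.re_coe, Quaternion.imI_coe, Quaternion.imJ_coe,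
        Quaternion.imK_coe, Quaternion.re_star, Quaternion.imI_star, Quaternion.imJ_star,
        Quaternion.imK_star, hure]
      ring
    rw [this, map_mul, Quaternion.normSq_coe, Quaternion.normSq_coe, hun]
    ring
  have hkey : ‖(((‖q‖ ^ 4 - s ^ 2 : ℝ) : Quaternion ℝ) + 2 * (s : Quaternion ℝ) * star q * qi * q)‖
      = ‖q‖ ^ 4 + s ^ 2 := by
    have := Quaternion.normSq_eq_norm_mul_self (((‖q‖ ^ 4 - s ^ 2 : ℝ) : Quaternion ℝ) + 2 * (s : Quaternion ℝ) * star q * qi * q)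
    nlinarith [norm_nonneg (((‖q‖ ^ 4 - s ^ 2 : ℝ) : Quaternion ℝ) + 2 * (s : Quaternion ℝ) * star q * qi * q)]
  rw [Tplus, norm_div, hkey, Quaternion.norm_coe, Real.norm_eq_abs, abs_of_pos hq4,
    div_self hq4.ne']
end

section
/- For every nonzero quaternion p and every real number s, the quaternion (|p|⁴·s² − 1 + 2s·p̄·i·p)·(|p|⁴·s² + 1)⁻¹·((s − i)·(s + i)⁻¹)² has norm 1. -/
@[simp] lemma qi_re : qi.re = 0 := rfl
@[simp] lemma qi_imI : qi.imI = 1 := rfl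
@[simp] lemma qi_imJ : qi.imJ = 0 := rfl
@[simp] lemma qi_imK : qi.imK = 0 := rfl

open Quaternion in
theorem Tminus_norm_one (p : Quaternion ℝ) (hp : p ≠ 0) (s : ℝ) :
    ‖(((‖p‖ ^ 4 * s ^ 2 - 1 : ℝ) : Quaternion ℝ) + 2 * (s : Quaternion ℝ) * star p * qi * p) *
        (((‖p‖ ^ 4 * s ^ 2 + 1 : ℝ) : Quaternion ℝ))⁻¹ *
        (((s : Quaternion ℝ) - qi) * ((s : Quaternion ℝ) + qi)⁻¹) ^ 2‖ = 1 := by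
  have hnqi : normSq qi = 1 := by simp [Quaternion.normSq_def']
  set r : ℝ := ‖p‖ ^ 4 * s ^ 2 - 1 with hr
  set q : Quaternion ℝ := 2 * (s : Quaternion ℝ) * star p * qi * p with hq
  set c : ℝ := ‖p‖ ^ 4 * s ^ 2 + 1 with hc
  have hcpos : (0:ℝ) < c := by positivity
  -- real part of q is zero
  have hqre : q.re = 0 := by
    rw [hq, show ((2:Quaternion ℝ)) = ((2:ℝ):Quaternion ℝ) by norm_cast]
    simp [Quaternion.re_mul]
    ring
  -- normSq of q
  have hnq : normSq q = 4 * s ^ 2 * ‖p‖ ^ 4 := by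
    rw [hq, show ((2:Quaternion ℝ)) = ((2:ℝ):Quaternion ℝ) by norm_cast]
    rw [map_mul, map_mul, map_mul, map_mul, hnqi, Quaternion.normSq_star,
      Quaternion.normSq_coe, Quaternion.normSq_coe,
      Quaternion.normSq_eq_norm_mul_self]
    ring
  -- norm of the first factor
  have hX : ‖((r : ℝ) : Quaternion ℝ) + q‖ = c := by
    have h1 : ‖((r : ℝ) : Quaternion ℝ) + q‖ * ‖((r : ℝ) : Quaternion ℝ) + q‖ = c * c := by
      rw [← Quaternion.normSq_eq_norm_mul_self, Quaternion.normSq_add, hnq,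
        Quaternion.normSq_coe]
      have h2 : ((r : ℝ) : Quaternion ℝ) * star q = (r : ℝ) • star q := by
        rw [Quaternion.coe_mul_eq_smul]
      rw [h2]
      simp only [Quaternion.re_smul, Quaternion.re_star, hqre, smul_eq_mul, mul_zero]
      rw [hr, hc]; ring
    have := congrArg Real.sqrt h1
    rwa [Real.sqrt_mul_self (norm_nonneg _), Real.sqrt_mul_self hcpos.le] at this
  -- s + qi is nonzero
  have hsq : ((s : Quaternion ℝ) + qi) ≠ 0 := by
    intro h
    have : ((s : Quaternion ℝ) + qi).imI = 0 := by rw [h]; simp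
    simp at this
  -- s - qi = star (s + qi)
  have hstar : ((s : Quaternion ℝ) - qi) = star ((s : Quaternion ℝ) + qi) := by
    ext <;> simp
  rw [norm_mul, norm_mul, norm_pow, norm_mul, norm_inv, norm_inv, hX, hstar,
    Quaternion.norm_star, Quaternion.norm_coe]
  rw [mul_inv_cancel₀ (norm_ne_zero_iff.mpr hsq)]
  rw [Real.norm_eq_abs, abs_of_pos hcpos, mul_inv_cancel₀ hcpos.ne']
  norm_num
end
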